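/- Let H be a closed m-shift system for f, and let W be a set which locally divides H and which contains every minimal set of f that is contained in the core Z_0(H). Then there exists ζ ∈ ℕ such that for every x ∈ X with f^j(x) ∈ C(H) for all 0 ≤ j ≤ ζ−1, one has f^{ζ−1}(x) ∈ W. -/

import Mathlib

open Dynamics

/-- Discrete uniformity on `Fin m`, compatible with its discrete topology. -/
instance (m : ℕ) : UniformSpace (Fin m) := ⊥

/-- The one-sided shift map on `Σ_m = {1,…,m}^ℕ`, modelled as `ℕ → Fin m`. -/
def shiftMap (m : ℕ) : (ℕ → Fin m) → (ℕ → Fin m) := fun a n => a (n + 1)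

variable {X : Type*}

/-- `H = (H_1, …, H_m)` is an `m`-shift system for `f`: each `H i` is nonempty and
`f(H_i) ⊇ H_1 ∪ ⋯ ∪ H_m` for every `i`. -/
def IsShiftSystem (f : X → X) {m : ℕ} (H : Fin m → Set X) : Prop :=
  (∀ i, (H i).Nonempty) ∧ ∀ i, (⋃ j, H j) ⊆ f '' H i

/-- A closed `m`-shift system: an `m`-shift system all of whose sets are closed. -/
def IsClosedShiftSystem [TopologicalSpace X] (f : X → X) {m : ℕ} (H : Fin m → Set X) : Prop :=
  IsShiftSystem f H ∧ ∀ i, IsClosed (H i)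

/-- The itinerary set `It(x)` of a point `x`. -/
def itin (f : X → X) {m : ℕ} (H : Fin m → Set X) (x : X) : Set (ℕ → Fin m) :=
  {a | ∀ i : ℕ, f^[i] x ∈ H (a i)}

/-- The itinerary set `It(S) = ⋃_{x ∈ S} It(x)` of a subset `S ⊆ X`. -/
def itinSet (f : X → X) {m : ℕ} (H : Fin m → Set X) (S : Set X) : Set (ℕ → Fin m) :=
  ⋃ x ∈ S, itin f H x

/-- The `n`-itinerary set `It_n(x)` of a point `x`. -/
def itinN (f : X → X) {m : ℕ} (H : Fin m → Set X) (n : ℕ) (x : X) : Set (Fin n → Fin m) :=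
  {w | ∀ i : Fin n, f^[(i : ℕ)] x ∈ H (w i)}

/-- `A(n)`: the set of initial subwords of length `n` of elements of `A ⊆ Σ_m`. -/
def initWords {m : ℕ} (A : Set (ℕ → Fin m)) (n : ℕ) : Set (Fin n → Fin m) :=
  (fun (a : ℕ → Fin m) (i : Fin n) => a (i : ℕ)) '' A

/-- `π(w) = ⋂_{i<n} f^{-i}(H_{w_i})` for a finite word `w`. -/
def piWord (f : X → X) {m n : ℕ} (H : Fin m → Set X) (w : Fin n → Fin m) : Set X :=
  ⋂ i : Fin n, f^[(i : ℕ)] ⁻¹' H (w i)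

/-- `π(α) = ⋂_{i≥0} f^{-i}(H_{α_i})` for a sequence `α ∈ Σ_m`. -/
def piSeq (f : X → X) {m : ℕ} (H : Fin m → Set X) (α : ℕ → Fin m) : Set X :=
  ⋂ i : ℕ, f^[i] ⁻¹' H (α i)

/-- `π(A) = ⋃_{w ∈ A} π(w)` for a set `A` of `n`-words. -/
def piWordSet (f : X → X) {m n : ℕ} (H : Fin m → Set X) (A : Set (Fin n → Fin m)) : Set X :=
  ⋃ w ∈ A, piWord f H w

/-- `π(A) = ⋃_{α ∈ A} π(α)` for a set `A ⊆ Σ_m` of sequences. -/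
def piSeqSet (f : X → X) {m : ℕ} (H : Fin m → Set X) (A : Set (ℕ → Fin m)) : Set X :=
  ⋃ α ∈ A, piSeq f H α

/-- The center `C(H) = ⋂ i, H i`. -/
def centerSet {m : ℕ} (H : Fin m → Set X) : Set X := ⋂ i, H i

/-- The core `Z_0(H) = ⋂_{k≥0} f^{-k}(C(H))`. -/
def coreSet (f : X → X) {m : ℕ} (H : Fin m → Set X) : Set X :=
  ⋂ k : ℕ, f^[k] ⁻¹' centerSet H

/-- The domain `D(H) = ⋂_{k≥0} f^{-k}(ℍ)` where `ℍ = H_1 ∪ ⋯ ∪ H_m`. -/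
def domainSet (f : X → X) {m : ℕ} (H : Fin m → Set X) : Set X :=
  ⋂ k : ℕ, f^[k] ⁻¹' (⋃ j, H j)

/-- The kernel `Ker(H)`: points lying in at least two of the sets `H i`. -/
def kernelSet {m : ℕ} (H : Fin m → Set X) : Set X :=
  {x | ∃ i j, i ≠ j ∧ x ∈ H i ∧ x ∈ H j}

/-- The kernel of `H` is eventually countable: some image `f^j(Ker(H))` is countable. -/
def EventuallyCountableKernel (f : X → X) {m : ℕ} (H : Fin m → Set X) : Prop :=
  ∃ j : ℕ, (f^[j] '' kernelSet H).Countable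

/-- `H` is nontrivial: `H_i \ Z_0(H) ≠ ∅` for every `i`. -/
def IsNontrivialShiftSystem (f : X → X) {m : ℕ} (H : Fin m → Set X) : Prop :=
  ∀ i, (H i \ coreSet f H).Nonempty

/-- A minimal set of `f`: a nonempty closed invariant set with no proper nonempty closed
invariant subset. -/
def IsMinimalSet [TopologicalSpace X] (f : X → X) (M : Set X) : Prop :=
  M.Nonempty ∧ IsClosed M ∧ f '' M ⊆ M ∧
    ∀ M' : Set X, M' ⊆ M → M'.Nonempty → IsClosed M' → f '' M' ⊆ M' → M' = M

/-- A shift-minimal subset of `Σ_m`. -/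
def IsShiftMinimal {m : ℕ} (Γ : Set (ℕ → Fin m)) : Prop :=
  Γ.Nonempty ∧ IsClosed Γ ∧ shiftMap m '' Γ ⊆ Γ ∧
    ∀ Γ' : Set (ℕ → Fin m), Γ' ⊆ Γ → Γ'.Nonempty → IsClosed Γ' →
      shiftMap m '' Γ' ⊆ Γ' → Γ' = Γ

/-- A periodic orbit of `f`. -/
def IsPeriodicOrbit (f : X → X) (P : Set X) : Prop :=
  ∃ (x : X) (n : ℕ), 0 < n ∧ f^[n] x = x ∧ P = Set.range fun i => f^[i] x

/-- The virtual entropy `ĥ(S)`: the topological entropy of the shift restricted to `It(S)`. -/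
noncomputable def virtualEntropy (f : X → X) {m : ℕ} (H : Fin m → Set X) (S : Set X) : EReal :=
  coverEntropy (shiftMap m) (itinSet f H S)

/-- `W` locally divides the shift system `H`. -/
def LocallyDivides [TopologicalSpace X] (f : X → X) {m : ℕ} (H : Fin m → Set X)
    (W : Set X) : Prop :=
  f '' W ⊆ W ∧ (∀ i, (H i \ W).Nonempty) ∧
    ∃ Λ : Set (ℕ → Fin m), IsClosed Λ ∧ shiftMap m '' Λ ⊆ Λ ∧
      coverEntropy (shiftMap m) Λ < (Real.log m : EReal) ∧
      ∃ V ∈ nhdsSet W, ∀ (x : X) (n : ℕ), 1 ≤ n →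
        (∀ i < n, f^[i] x ∈ V \ W) → itinN f H n x ⊆ initWords Λ n

/-- The ω-limit set of `x` under `f`. -/
def omegaLimitSet [TopologicalSpace X] (f : X → X) (x : X) : Set X :=
  ⋂ N : ℕ, closure (Set.range fun n : ℕ => f^[N + n] x)

/-- `limsup` of a sequence of sets: `⋂_{k≥1} ⋃_{i≥k} A_i`. -/
def limsupSets {β : Type*} (A : ℕ → Set β) : Set β :=
  ⋂ k : ℕ, ⋃ i : ℕ, ⋃ _ : k ≤ i, A i


section Aux

open Set Filter Topology Uniformity UniformSpace
open scoped ENNReal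

lemma shiftMap_iterate (m k : ℕ) (a : ℕ → Fin m) (n : ℕ) :
    (shiftMap m)^[k] a n = a (n + k) := by
  induction k generalizing a n with
  | zero => rfl
  | succ k ih =>
    rw [Function.iterate_succ_apply, ih]
    simp [shiftMap, Nat.add_assoc, Nat.add_comm 1 k]

/-- The entourage of sequences agreeing at coordinate `0`. -/
def cyl0 (m : ℕ) : Set ((ℕ → Fin m) × (ℕ → Fin m)) := {p | p.1 0 = p.2 0}

lemma cyl0_mem_uniformity (m : ℕ) : cyl0 m ∈ 𝓤 (ℕ → Fin m) := by
  rw [Pi.uniformity]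
  have h1 : 𝓤 (Fin m) = 𝓟 SetRel.id := bot_uniformity
  have h2 : (fun a : (ℕ → Fin m) × (ℕ → Fin m) => (a.1 0, a.2 0)) ⁻¹' SetRel.id ∈
      Filter.comap (fun a : (ℕ → Fin m) × (ℕ → Fin m) => (a.1 0, a.2 0)) (𝓤 (Fin m)) :=
    Filter.preimage_mem_comap (by rw [h1]; exact mem_principal_self _)
  have he : (fun a : (ℕ → Fin m) × (ℕ → Fin m) => (a.1 0, a.2 0)) ⁻¹' SetRel.id = cyl0 m := by
    ext p; simp [cyl0, SetRel.id]
  exact mem_iInf_of_mem 0 (he ▸ h2)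

lemma pow_le_coverMincard {m : ℕ} (hm : 0 < m) (n : ℕ) :
    ((m ^ n : ℕ) : ℕ∞) ≤ coverMincard (shiftMap m) Set.univ (cyl0 m) n := by
  classical
  refine le_iInf₂ fun s hs => ?_
  haveI : Inhabited (Fin m) := ⟨⟨0, hm⟩⟩
  set ext : (Fin n → Fin m) → (ℕ → Fin m) :=
    fun w i => if h : i < n then w ⟨i, h⟩ else default with hext
  have key : ∀ w : Fin n → Fin m,
      ∃ c ∈ s, ext w ∈ ball c (dynEntourage (shiftMap m) (cyl0 m) n) := by
    intro w
    have := hs (mem_univ (ext w))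
    obtain ⟨y, hy, hxy⟩ := this
    refine ⟨y, hy, mem_ball_dynEntourage.2 fun k hk => ?_⟩
    have h2 := (mem_dynEntourage.1 hxy) k hk
    simp only [ball, mem_preimage, cyl0, mem_setOf_eq] at h2 ⊢
    exact h2.symm
  choose c hc hball using key
  have hcoord : ∀ (w : Fin n → Fin m) (i : Fin n), c w (i : ℕ) = w i := by
    intro w i
    have h1 := (mem_ball_dynEntourage.1 (hball w)) i i.2
    simp only [ball, mem_preimage, cyl0, mem_setOf_eq, shiftMap_iterate, Nat.zero_add] at h1
    rw [h1, hext]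
    simp [i.2]
  have hinj : Function.Injective c := by
    intro w w' hww'
    funext i
    rw [← hcoord w i, ← hcoord w' i, hww']
  have hcard : Fintype.card (Fin n → Fin m) ≤ s.card := by
    have := Fintype.card_le_of_injective (fun w => (⟨c w, hc w⟩ : {x // x ∈ s}))
      (fun w w' h => hinj (by simpa using congrArg Subtype.val h))
    simpa using this
  calc ((m ^ n : ℕ) : ℕ∞) = (Fintype.card (Fin n → Fin m) : ℕ∞) := by simp
    _ ≤ (s.card : ℕ∞) := by exact_mod_cast hcard

lemma log_le_coverEntropy_univ {m : ℕ} (hm : 1 ≤ m) :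
    (Real.log m : EReal) ≤ coverEntropy (shiftMap m) Set.univ := by
  refine le_trans ?_ (coverEntropyEntourage_le_coverEntropy _ _ (cyl0_mem_uniformity m))
  rw [coverEntropyEntourage]
  have key : ∀ n : ℕ, 1 ≤ n → (Real.log m : EReal) ≤
      ENNReal.log (coverMincard (shiftMap m) Set.univ (cyl0 m) n) / (n : EReal) := by
    intro n hn
    rw [EReal.le_div_iff_mul_le (by exact_mod_cast Nat.cast_pos'.2 hn)
      (by exact EReal.natCast_ne_top n)]
    have h1 : ENNReal.log ((m : ℝ≥0∞) ^ n) ≤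
        ENNReal.log (coverMincard (shiftMap m) Set.univ (cyl0 m) n) := by
      apply ENNReal.log_monotone
      have h2 : (((m ^ n : ℕ) : ℕ∞) : ℝ≥0∞) ≤
          ((coverMincard (shiftMap m) Set.univ (cyl0 m) n : ℕ∞) : ℝ≥0∞) :=
        ENat.toENNReal_mono (pow_le_coverMincard hm n)
      calc (m : ℝ≥0∞) ^ n = (((m ^ n : ℕ) : ℕ∞) : ℝ≥0∞) := by push_cast; ring
        _ ≤ _ := h2
    refine le_trans ?_ h1
    rw [ENNReal.log_pow]
    have h3 : ENNReal.log (m : ℝ≥0∞) = (Real.log m : EReal) := by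
      rw [ENNReal.log_pos_real' (by simp [Nat.lt_of_lt_of_le Nat.zero_lt_one hm])]
      simp
    rw [h3, mul_comm]
  calc (Real.log m : EReal)
      = atTop.limsup (fun _ : ℕ => (Real.log m : EReal)) := (limsup_const _).symm
    _ ≤ _ := limsup_le_limsup (by filter_upwards [eventually_ge_atTop 1] using key)

lemma exists_word_not_initWords {m : ℕ} (hm : 1 ≤ m) {L : Set (ℕ → Fin m)}
    (hLc : IsClosed L) (hent : coverEntropy (shiftMap m) L < (Real.log m : EReal)) :
    ∃ n : ℕ, 1 ≤ n ∧ ∃ w : Fin n → Fin m, w ∉ initWords L n := by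
  by_contra h
  push_neg at h
  have hL : L = Set.univ := by
    refine eq_univ_of_forall fun α => ?_
    have key : ∀ n : ℕ, ∃ a ∈ L, ∀ i : Fin (n + 1), a (i : ℕ) = α (i : ℕ) := by
      intro n
      obtain ⟨a, ha, hag⟩ := h (n + 1) (by omega) (fun i : Fin (n + 1) => α (i : ℕ))
      exact ⟨a, ha, fun i => congrFun hag i⟩
    choose a ha hag using key
    have htend : Tendsto a atTop (𝓝 α) := by
      refine tendsto_pi_nhds.2 fun i => ?_
      refine Tendsto.congr' ?_ tendsto_const_nhds
      filter_upwards [eventually_ge_atTop i] with n hn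
      exact (hag n ⟨i, by omega⟩).symm
    have := mem_closure_of_tendsto htend (Eventually.of_forall ha)
    rwa [hLc.closure_eq] at this
  rw [hL] at hent
  exact absurd hent (not_lt.2 (log_le_coverEntropy_univ hm))

lemma exists_minimalSet [TopologicalSpace X] [CompactSpace X] (f : X → X)
    {K : Set X} (hKne : K.Nonempty) (hKc : IsClosed K) (hKinv : f '' K ⊆ K) :
    ∃ M ⊆ K, IsMinimalSet f M := by
  set S : Set (Set X) := {A | A ⊆ K ∧ A.Nonempty ∧ IsClosed A ∧ f '' A ⊆ A} with hS
  have hKS : K ∈ S := ⟨Set.Subset.rfl, hKne, hKc, hKinv⟩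
  have hzorn : ∀ c ⊆ S, IsChain (· ⊆ ·) c → c.Nonempty → ∃ lb ∈ S, ∀ s ∈ c, lb ⊆ s := by
    intro c hcS hchain hcne
    refine ⟨⋂₀ c, ⟨?_, ?_, ?_, ?_⟩, fun s hs => sInter_subset_of_mem hs⟩
    · obtain ⟨s, hs⟩ := hcne
      exact (sInter_subset_of_mem hs).trans (hcS hs).1
    · haveI : Nonempty c := hcne.to_subtype
      refine IsCompact.nonempty_sInter_of_directed_nonempty_isCompact_isClosed ?_
        (fun U hU => (hcS hU).2.1) (fun U hU => (hcS hU).2.2.1.isCompact)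
        (fun U hU => (hcS hU).2.2.1)
      intro a ha b hb
      rcases hchain.total ha hb with h | h
      · exact ⟨a, ha, subset_refl a, h⟩
      · exact ⟨b, hb, h, subset_refl b⟩
    · exact isClosed_sInter fun U hU => (hcS hU).2.2.1
    · intro y hy
      obtain ⟨x, hx, rfl⟩ := hy
      refine mem_sInter.2 fun U hU => (hcS hU).2.2.2 ⟨x, mem_sInter.1 hx U hU, rfl⟩
  obtain ⟨M, hMK, hMmin⟩ := zorn_superset_nonempty S hzorn K hKS
  obtain ⟨hMS, hMle⟩ := hMmin
  refine ⟨M, hMK, hMS.2.1, hMS.2.2.1, hMS.2.2.2, fun M' hM'M hM'ne hM'c hM'inv => ?_⟩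
  exact subset_antisymm hM'M (hMle ⟨hM'M.trans hMS.1, hM'ne, hM'c, hM'inv⟩ hM'M)

end Aux

open Set Filter Topology

/-- If `W` locally divides `H` and contains every minimal set contained in the core, then
there is `ζ ∈ ℕ` such that any orbit segment of length `ζ` contained in the center `C(H)`
terminates in `W`. -/
theorem orbit_in_center_terminates_in_W [MetricSpace X] [CompactSpace X]
    {f : X → X} (hf : Continuous f) {m : ℕ} (hm : 1 ≤ m) {H : Fin m → Set X}
    (hH : IsClosedShiftSystem f H) {W : Set X} (hdiv : LocallyDivides f H W)
    (hmin : ∀ M : Set X, IsMinimalSet f M → M ⊆ coreSet f H → M ⊆ W) :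
    ∃ ζ : ℕ, 0 < ζ ∧ ∀ x : X, (∀ j < ζ, f^[j] x ∈ centerSet H) → f^[ζ - 1] x ∈ W := by
  classical
  obtain ⟨hW_inv, hne, Λ, hΛc, hΛinv, hΛent, V, hV, hVprop⟩ := hdiv
  obtain ⟨n₀, hn₀, w₀, hw₀⟩ := exists_word_not_initWords hm hΛc hΛent
  have hC_closed : IsClosed (centerSet H) := isClosed_iInter hH.2
  have hWiter : ∀ (k : ℕ) (w : X), w ∈ W → f^[k] w ∈ W := by
    intro k
    induction k with
    | zero => exact fun w hw => hw
    | succ k ih =>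
      intro w hw
      rw [Function.iterate_succ_apply']
      exact hW_inv ⟨_, ih w hw, rfl⟩
  set U := interior V with hU
  have hWU : W ⊆ U := subset_interior_iff_mem_nhdsSet.2 hV
  by_contra hcon
  push_neg at hcon
  have hwit : ∀ N : ℕ, ∃ x : X, (∀ j < N + 1, f^[j] x ∈ centerSet H) ∧ f^[N] x ∉ W := by
    intro N
    obtain ⟨x, hx1, hx2⟩ := hcon (N + 1) (Nat.succ_pos N)
    exact ⟨x, hx1, by simpa using hx2⟩
  choose x hxC hxW using hwit
  have hxW' : ∀ N, ∀ j ≤ N, f^[j] (x N) ∉ W := by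
    intro N j hj hmem
    apply hxW N
    have he : f^[N] (x N) = f^[N - j] (f^[j] (x N)) := by
      rw [← Function.iterate_add_apply]
      congr 1
      omega
    rw [he]
    exact hWiter _ _ hmem
  by_cases hrun : ∃ N t, t + n₀ ≤ N + 1 ∧ ∀ i < n₀, f^[t + i] (x N) ∈ U
  · obtain ⟨N, t, htN, hrun⟩ := hrun
    set y := f^[t] (x N) with hy
    have hyi : ∀ i < n₀, f^[i] y ∈ V \ W := by
      intro i hi
      have he : f^[i] y = f^[t + i] (x N) := by
        rw [hy, ← Function.iterate_add_apply]
        congr 1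
        omega
      constructor
      · rw [he]; exact interior_subset (hrun i hi)
      · rw [he]; exact hxW' N (t + i) (by omega)
    have hsub := hVprop y n₀ hn₀ hyi
    have hyC : ∀ i : Fin n₀, f^[(i : ℕ)] y ∈ centerSet H := by
      intro i
      have he : f^[(i : ℕ)] y = f^[t + (i : ℕ)] (x N) := by
        rw [hy, ← Function.iterate_add_apply]
        congr 1
        omega
      rw [he]
      exact hxC N _ (by have := i.2; omega)
    have hmem : w₀ ∈ itinN f H n₀ y := fun i => mem_iInter.1 (hyC i) (w₀ i)
    exact hw₀ (hsub hmem)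
  · push_neg at hrun
    obtain ⟨z, φ, hφ, hz⟩ := CompactSpace.tendsto_subseq x
    have hiter_tend : ∀ j : ℕ, Tendsto (fun N => f^[j] (x (φ N))) atTop (𝓝 (f^[j] z)) :=
      fun j => ((hf.iterate j).tendsto z).comp hz
    have hzC : ∀ j, f^[j] z ∈ centerSet H := by
      intro j
      refine hC_closed.mem_of_tendsto (hiter_tend j) ?_
      filter_upwards [eventually_ge_atTop j] with N hN
      exact hxC (φ N) j (by have : N ≤ φ N := hφ.le_apply; omega)
    have hzrun : ∀ t, ∃ i < n₀, f^[t + i] z ∉ U := by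
      intro t
      have hSclosed : IsClosed (⋃ i : Fin n₀, f^[t + (i : ℕ)] ⁻¹' Uᶜ) :=
        isClosed_iUnion_of_finite fun i =>
          (isOpen_interior.isClosed_compl).preimage (hf.iterate _)
      have hmem : ∀ᶠ N in atTop, x (φ N) ∈ (⋃ i : Fin n₀, f^[t + (i : ℕ)] ⁻¹' Uᶜ) := by
        filter_upwards [eventually_ge_atTop (t + n₀)] with N hN
        obtain ⟨i, hi, hiU⟩ := hrun (φ N) t (by have : N ≤ φ N := hφ.le_apply; omega)
        exact mem_iUnion.2 ⟨⟨i, hi⟩, hiU⟩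
      have hmem2 := hSclosed.mem_of_tendsto hz hmem
      obtain ⟨i, hi⟩ := mem_iUnion.1 hmem2
      exact ⟨(i : ℕ), i.2, hi⟩
    set K := closure (Set.range fun t => f^[t] z) with hK
    have hKne : K.Nonempty := ⟨z, subset_closure ⟨0, rfl⟩⟩
    have hKc : IsClosed K := isClosed_closure
    have horb : f '' (Set.range fun t => f^[t] z) ⊆ Set.range fun t => f^[t] z := by
      rintro _ ⟨_, ⟨t, rfl⟩, rfl⟩
      exact ⟨t + 1, by simp [Function.iterate_succ_apply']⟩
    have hKinv : f '' K ⊆ K := by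
      refine subset_trans ?_ (closure_mono horb)
      exact image_closure_subset_closure_image hf
    have hKcore : K ⊆ coreSet f H := by
      have hcore_closed : IsClosed (coreSet f H) :=
        isClosed_iInter fun k => hC_closed.preimage (hf.iterate k)
      refine closure_minimal ?_ hcore_closed
      rintro _ ⟨t, rfl⟩
      refine mem_iInter.2 fun k => ?_
      simp only [mem_preimage]
      rw [← Function.iterate_add_apply]
      exact hzC (k + t)
    obtain ⟨M, hMK, hMmin⟩ := exists_minimalSet f hKne hKc hKinv
    have hMW : M ⊆ W := hmin M hMmin (hMK.trans hKcore)
    obtain ⟨y, hy⟩ := hMmin.1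
    have hyM : ∀ i : ℕ, f^[i] y ∈ M := by
      intro i
      induction i with
      | zero => exact hy
      | succ i ih =>
        rw [Function.iterate_succ_apply']
        exact hMmin.2.2.1 ⟨_, ih, rfl⟩
    set B := ⋂ i : Fin n₀, f^[(i : ℕ)] ⁻¹' U with hB
    have hBopen : IsOpen B :=
      isOpen_iInter_of_finite fun i => isOpen_interior.preimage (hf.iterate _)
    have hyB : y ∈ B := mem_iInter.2 fun i => hWU (hMW (hyM (i : ℕ)))
    have hyK : y ∈ closure (Set.range fun t => f^[t] z) := hMK hy
    obtain ⟨_, hwB, ⟨t, rfl⟩⟩ := (_root_.mem_closure_iff.1 hyK) B hBopen hyB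
    obtain ⟨i, hi, hiU⟩ := hzrun t
    apply hiU
    have hstep := mem_iInter.1 hwB ⟨i, hi⟩
    simp only [mem_preimage] at hstep
    rw [← Function.iterate_add_apply] at hstep
    rwa [Nat.add_comm t i]
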